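/- Let L_n ⊆ S_n be a zigzag language with n ≥ 1. For any two consecutive permutations π, ρ in J(L_n), the permutation ρ is obtained from π by a jump of the value s_{n,n}^π. -/

import Mathlib

/-!
Shared definitions: permutations in one-line notation as lists of naturals,
deletion `p`, insertion `c_i`, zigzag languages, the Gray code sequence `J(L_n)`,
jumps, minimal jumps, the auxiliary sequences `s_n^π`, Algorithm M,
vincular pattern containment and 2-clumped permutations.
-/

/-- `S_n`: permutations of `{1,…,n}` in one-line notation, as lists of naturals. -/
def SymmList (n : ℕ) : Set (List ℕ) := {l | List.Perm l (List.range' 1 n)}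

/-- The identity permutation `id_n = 1 2 ⋯ n`. -/
def idPerm (n : ℕ) : List ℕ := List.range' 1 n

/-- `p(π)`: delete the largest entry `n = π.length` from the permutation `π ∈ S_n`. -/
def pdel (l : List ℕ) : List ℕ := l.erase l.length

/-- `c_i(π)`: insert the new largest value `π.length + 1` at (1-indexed) position `i`. -/
def cins (i : ℕ) (l : List ℕ) : List ℕ :=
  l.take (i - 1) ++ (l.length + 1) :: l.drop (i - 1)

/-- Zigzag languages of permutations: `L_0 = {ε}` is a zigzag language, and
`L ⊆ S_{n+1}` is a zigzag language if `p(L)` is a zigzag language and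
`c_1(π), c_{n+1}(π) ∈ L` for every `π ∈ p(L)`. -/
inductive IsZigzag : ℕ → Set (List ℕ) → Prop
  | zero : IsZigzag 0 {[]}
  | succ (n : ℕ) (L : Set (List ℕ)) :
      L ⊆ SymmList (n + 1) →
      IsZigzag n (pdel '' L) →
      (∀ l ∈ pdel '' L, cins 1 l ∈ L ∧ cins (n + 1) l ∈ L) →
      IsZigzag (n + 1) L

/-- `→c(π)`: the sequence of those `c_1(π),…,c_n(π)` lying in `L`,
in increasing order of the insertion position. -/
noncomputable def cSeq (L : Set (List ℕ)) (n : ℕ) (l : List ℕ) : List (List ℕ) :=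
  ((List.range' 1 n).map (fun i => cins i l)).filter
    (fun x => @decide (x ∈ L) (Classical.propDecidable _))

/-- The Gray code sequence `J(L_n)` of a language `L ⊆ S_n`:
`J(L_0) = ε`, and `J(L_{n+1})` is obtained from `J(L_n)` (for the language
`p(L)`) by replacing its entries alternately by `←c(π)` (the reverse of
`→c(π)`) and `→c(π)`. -/
noncomputable def Jseq : ℕ → Set (List ℕ) → List (List ℕ)
  | 0, _ => [[]]
  | (n + 1), L =>
      (((Jseq n (pdel '' L)).mapIdx
        (fun k π => if k % 2 = 0 then (cSeq L (n + 1) π).reverse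
                    else cSeq L (n + 1) π)).flatten)

/-- `ρ` is obtained from `π` by a right jump of the value `v` by `d` steps. -/
def RightJump (π ρ : List ℕ) (v d : ℕ) : Prop :=
  0 < d ∧ ∃ A B C : List ℕ, B.length = d ∧ (∀ x ∈ B, x < v) ∧
    π = A ++ v :: (B ++ C) ∧ ρ = A ++ (B ++ v :: C)

/-- `ρ` is obtained from `π` by a left jump of the value `v` by `d` steps. -/
def LeftJump (π ρ : List ℕ) (v d : ℕ) : Prop := RightJump ρ π v d

/-- A right jump that is minimal with respect to `L`: every right jump of the
same value by fewer steps yields a permutation not in `L`. -/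
def MinimalRightJump (L : Set (List ℕ)) (π ρ : List ℕ) (v d : ℕ) : Prop :=
  RightJump π ρ v d ∧ ∀ d' ρ', d' < d → RightJump π ρ' v d' → ρ' ∉ L

/-- A left jump that is minimal with respect to `L`. -/
def MinimalLeftJump (L : Set (List ℕ)) (π ρ : List ℕ) (v d : ℕ) : Prop :=
  LeftJump π ρ v d ∧ ∀ d' ρ', d' < d → LeftJump π ρ' v d' → ρ' ∉ L

/-- The auxiliary sequence `s_n^π` of a permutation `π` occurring in `J(L_n)`,
as a function of the index `i ∈ {1,…,n}` (value `0` outside this range). -/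
noncomputable def sVec : ℕ → Set (List ℕ) → List ℕ → ℕ → ℕ
  | 0, _, _, _ => 0
  | 1, _, _, i => if i = 1 then 1 else 0
  | (n + 2), L, π, i =>
      let L' := pdel '' L
      let π' := pdel π
      let cbar := if ((Jseq (n + 1) L').idxOf π') % 2 = 0
                  then (cSeq L (n + 2) π').reverse else cSeq L (n + 2) π'
      if cbar.getLast? = some π then
        (if i ≤ n then sVec (n + 1) L' π' i
         else if i = n + 1 then n + 1
         else if i = n + 2 then sVec (n + 1) L' π' (n + 1) else 0)
      else
        (if i ≤ n + 1 then sVec (n + 1) L' π' i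
         else if i = n + 2 then n + 2 else 0)

/-- `j` is at the first position of `l`, or the entry immediately left of `j`
in `l` is larger than `j`. -/
def AtLeftTurn (l : List ℕ) (j : ℕ) : Prop :=
  ∃ A B : List ℕ, l = A ++ j :: B ∧ (A = [] ∨ ∃ x, A.getLast? = some x ∧ j < x)

/-- `j` is at the last position of `l`, or the entry immediately right of `j`
in `l` is larger than `j`. -/
def AtRightTurn (l : List ℕ) (j : ℕ) : Prop :=
  ∃ A B : List ℕ, l = A ++ j :: B ∧ (B = [] ∨ ∃ x, B.head? = some x ∧ j < x)

/-- `j` is not at the first position of `l`, and the entry immediately left of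
`j` in `l` is smaller than `j`. -/
def SmallerLeftNeighbor (l : List ℕ) (j : ℕ) : Prop :=
  ∃ A B : List ℕ, ∃ x, l = A ++ j :: B ∧ A.getLast? = some x ∧ x < j

/-- `j` is not at the last position of `l`, and the entry immediately right of
`j` in `l` is smaller than `j`. -/
def SmallerRightNeighbor (l : List ℕ) (j : ℕ) : Prop :=
  ∃ A B : List ℕ, ∃ x, l = A ++ j :: B ∧ B.head? = some x ∧ x < j

/-- A state of Algorithm M: the current permutation `π` and the auxiliary
arrays `o` and `s`; `o j = false` encodes direction `L` (left) and
`o j = true` encodes `R` (right). -/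
structure MState where
  perm : List ℕ
  o : ℕ → Bool
  s : ℕ → ℕ

/-- The initial state of Algorithm M (step M1): `π = id_n`, `o_j = L`, `s_j = j`. -/
def MInit (n : ℕ) : MState := ⟨idPerm n, fun _ => false, fun j => j⟩

/-- One iteration (steps M3–M5) of Algorithm M on a language `L ⊆ S_n`:
with `j := s_n ≠ 1`, the permutation jumps minimally in the direction `o_j`
(step M4), and the arrays `o`, `s` are updated as in step M5. -/
def MStep (L : Set (List ℕ)) (n : ℕ) (σ σ' : MState) : Prop :=
  σ.s n ≠ 1 ∧
  σ'.perm ∈ L ∧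
  ((σ.o (σ.s n) = false ∧ ∃ d, MinimalLeftJump L σ.perm σ'.perm (σ.s n) d) ∨
   (σ.o (σ.s n) = true ∧ ∃ d, MinimalRightJump L σ.perm σ'.perm (σ.s n) d)) ∧
  (((σ.o (σ.s n) = false ∧ AtLeftTurn σ'.perm (σ.s n)) ∨
    (σ.o (σ.s n) = true ∧ AtRightTurn σ'.perm (σ.s n))) →
      σ'.o = Function.update σ.o (σ.s n) (!σ.o (σ.s n)) ∧
      σ'.s = Function.update (Function.update (Function.update σ.s n n) (σ.s n)
               ((Function.update σ.s n n) (σ.s n - 1))) (σ.s n - 1) (σ.s n - 1)) ∧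
  (¬ ((σ.o (σ.s n) = false ∧ AtLeftTurn σ'.perm (σ.s n)) ∨
      (σ.o (σ.s n) = true ∧ AtRightTurn σ'.perm (σ.s n))) →
      σ'.o = σ.o ∧ σ'.s = Function.update σ.s n n)

/-- `π` contains the vincular pattern `pat` whose marked adjacent pair starts
at (0-indexed) position `k` of `pat`. -/
def ContainsVincular (π pat : List ℕ) (k : ℕ) : Prop :=
  ∃ f : ℕ → ℕ, StrictMonoOn f (Set.Iio pat.length) ∧
    (∀ i < pat.length, f i < π.length) ∧
    f (k + 1) = f k + 1 ∧
    (∀ i < pat.length, ∀ j < pat.length,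
      (pat.getD i 0 < pat.getD j 0 ↔ π.getD (f i) 0 < π.getD (f j) 0))

/-- 2-clumped permutations: those avoiding the vincular patterns
`3(51)24`, `3(51)42`, `24(51)3` and `42(51)3`. -/
def TwoClumped (π : List ℕ) : Prop :=
  ¬ ContainsVincular π [3, 5, 1, 2, 4] 1 ∧ ¬ ContainsVincular π [3, 5, 1, 4, 2] 1 ∧
  ¬ ContainsVincular π [2, 4, 5, 1, 3] 2 ∧ ¬ ContainsVincular π [4, 2, 5, 1, 3] 2

/-- `S'_n`: the set of 2-clumped permutations in `S_n`. -/
def SClump (n : ℕ) : Set (List ℕ) := {l ∈ SymmList n | TwoClumped l}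

/-- `B_n`: the permutations obtained from `1` by repeatedly inserting the new
largest value at the first or the last position. -/
def Bset : ℕ → Set (List ℕ)
  | 0 => {[]}
  | 1 => {[1]}
  | (n + 2) => {l | ∃ π ∈ Bset (n + 1), l = cins 1 π ∨ l = cins (n + 2) π}

section AuxLemmas
open List

lemma symm_length {n : ℕ} {l : List ℕ} (h : l ∈ SymmList n) : l.length = n := by
  simpa using h.length_eq

lemma symm_mem {n : ℕ} {l : List ℕ} (h : l ∈ SymmList n) {x : ℕ} (hx : x ∈ l) :
    1 ≤ x ∧ x ≤ n := by
  have := (h.mem_iff).1 hx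
  rw [mem_range'_1] at this
  omega

lemma symm_mem_top {n : ℕ} {l : List ℕ} (h : l ∈ SymmList (n + 1)) : (n + 1) ∈ l := by
  rw [h.mem_iff, mem_range'_1]; omega

lemma symm_not_mem {n : ℕ} {l : List ℕ} (h : l ∈ SymmList n) : (n + 1) ∉ l := by
  intro hx; have := symm_mem h hx; omega

lemma symm_nodup {n : ℕ} {l : List ℕ} (h : l ∈ SymmList n) : l.Nodup :=
  h.nodup_iff.2 (List.nodup_range' 1 Nat.one_pos)

lemma cins_length (i : ℕ) (l : List ℕ) : (cins i l).length = l.length + 1 := by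
  simp [cins]; omega

lemma cins_one (l : List ℕ) : cins 1 l = (l.length + 1) :: l := by simp [cins]

lemma cins_last (l : List ℕ) : cins (l.length + 1) l = l ++ [l.length + 1] := by
  simp [cins]

lemma pdel_cins {n : ℕ} {l : List ℕ} (h : l ∈ SymmList n) (i : ℕ) :
    pdel (cins i l) = l := by
  have hlen : l.length = n := symm_length h
  have hnm : (n + 1) ∉ l := symm_not_mem h
  have hnt : (n + 1) ∉ l.take (i - 1) := fun hx => hnm (List.take_subset _ _ hx)
  rw [pdel, cins_length, cins, hlen]
  rw [List.erase_append_right _ hnt, List.erase_cons_head, List.take_append_drop]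

lemma cins_getElem {n : ℕ} {l : List ℕ} (h : l ∈ SymmList n) {i : ℕ}
    (h1 : 1 ≤ i) (h2 : i ≤ n + 1) : (cins i l)[i-1]? = some (n + 1) := by
  have hlen : l.length = n := symm_length h
  have htl : (l.take (i-1)).length = i - 1 := by
    rw [List.length_take]; omega
  rw [cins, getElem?_append, htl, hlen]
  simp

lemma cins_inj_i {n : ℕ} {l : List ℕ} (h : l ∈ SymmList n) {i j : ℕ}
    (hi1 : 1 ≤ i) (hi2 : i ≤ n + 1) (hj1 : 1 ≤ j) (hj2 : j ≤ n + 1)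
    (he : cins i l = cins j l) : i = j := by
  have hlen : l.length = n := symm_length h
  by_contra hne
  -- wlog i < j
  wlog hij : i < j generalizing i j
  · exact this hj1 hj2 hi1 hi2 he.symm (Ne.symm hne) (by omega)
  have h1 := cins_getElem h hi1 hi2
  rw [he] at h1
  -- (cins j l)[i-1] is an element of take (j-1) l
  have htl : (l.take (j-1)).length = j - 1 := by rw [List.length_take]; omega
  rw [cins, getElem?_append, htl] at h1
  have hlt : i - 1 < j - 1 := by omega
  rw [if_pos hlt] at h1
  have : (n+1) ∈ l.take (j-1) := by
    have := List.mem_of_getElem? h1  -- maybe wrong name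
    exact this
  exact symm_not_mem h (List.take_subset _ _ this)

lemma recons {n : ℕ} {l : List ℕ} (h : l ∈ SymmList (n + 1)) :
    ∃ i, 1 ≤ i ∧ i ≤ n + 1 ∧ l = cins i (pdel l) ∧ pdel l ∈ SymmList n := by
  have hlen : l.length = n + 1 := symm_length h
  have hmem : (n + 1) ∈ l := symm_mem_top h
  obtain ⟨A, B, rfl⟩ := List.append_of_mem hmem
  have hnd : (A ++ (n+1) :: B).Nodup := symm_nodup h
  have hA : (n + 1) ∉ A := by
    rw [List.nodup_append] at hnd
    exact fun hx => hnd.2.2 _ hx _ List.mem_cons_self rfl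
  have hpd : pdel (A ++ (n+1) :: B) = A ++ B := by
    rw [pdel, hlen, List.erase_append_right _ hA, List.erase_cons_head]
  have hABlen : (A ++ B).length = n := by
    have := hlen; simp at this ⊢; omega
  have hpdS : A ++ B ∈ SymmList n := by
    have h2 : (A ++ (n+1) :: B).erase (n+1) ~ (range' 1 (n+1)).erase (n+1) :=
      List.Perm.erase _ h
    have h3 : (range' 1 (n+1)).erase (n+1) = range' 1 n := by
      rw [List.range'_concat, List.erase_append_right
        _ (by intro hx; rw [mem_range'_1] at hx; omega)]
      have h15 : 1 + 1 * n = n + 1 := by omega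
      rw [h15, List.erase_cons_head, List.append_nil]
    have h4 : (A ++ (n+1) :: B).erase (n+1) = A ++ B := by
      rw [List.erase_append_right _ hA, List.erase_cons_head]
    rw [h4, h3] at h2
    exact h2
  refine ⟨A.length + 1, by omega, ?_, ?_, by rw [hpd]; exact hpdS⟩
  · have : A.length < (A ++ (n+1)::B).length := by simp
    omega
  · rw [hpd, cins, hABlen]
    have h1 : (A ++ B).take (A.length + 1 - 1) = A := by
      simp
    have h2 : (A ++ B).drop (A.length + 1 - 1) = B := by
      simp
    rw [h1, h2]

lemma zigzag_sub {n : ℕ} {L : Set (List ℕ)} (h : IsZigzag n L) : L ⊆ SymmList n := by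
  cases h with
  | zero => intro l hl; simp at hl; subst hl; simp [SymmList]
  | succ n L hsub _ _ => exact hsub

lemma zigzag_zero {L : Set (List ℕ)} (h : IsZigzag 0 L) : L = {[]} := by
  cases h; rfl

lemma mem_cSeq {L : Set (List ℕ)} {n : ℕ} {l x : List ℕ} :
    x ∈ cSeq L n l ↔ (∃ i, 1 ≤ i ∧ i ≤ n ∧ x = cins i l) ∧ x ∈ L := by
  simp only [cSeq, List.mem_filter, List.mem_map, mem_range'_1, decide_eq_true_eq]
  constructor
  · rintro ⟨⟨i, ⟨h1, h2⟩, rfl⟩, hx⟩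
    exact ⟨⟨i, h1, by omega, rfl⟩, hx⟩
  · rintro ⟨⟨i, h1, h2, rfl⟩, hx⟩
    exact ⟨⟨i, ⟨h1, by omega⟩, rfl⟩, hx⟩

lemma cSeq_nodup {L : Set (List ℕ)} {n : ℕ} {l : List ℕ} (h : l ∈ SymmList n) :
    (cSeq L (n + 1) l).Nodup := by
  apply List.Nodup.filter
  apply List.Nodup.map_on
  · intro i hi j hj he
    rw [mem_range'_1] at hi hj
    exact cins_inj_i h hi.1 (by omega) hj.1 (by omega) he
  · exact List.nodup_range' 1 Nat.one_pos

lemma cSeq_head {L : Set (List ℕ)} {n : ℕ} {l : List ℕ} (h : cins 1 l ∈ L) :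
    (cSeq L (n + 1) l).head? = some (cins 1 l) := by
  rw [cSeq, List.range'_succ, List.map_cons, List.filter_cons]
  have hd : (@decide (cins 1 l ∈ L) (Classical.propDecidable _)) = true :=
    @decide_eq_true _ (Classical.propDecidable _) h
  rw [if_pos hd]
  rfl

lemma cSeq_getLast {L : Set (List ℕ)} {n : ℕ} {l : List ℕ} (h : cins (n + 1) l ∈ L) :
    (cSeq L (n + 1) l).getLast? = some (cins (n + 1) l) := by
  rw [List.getLast?_eq_head?_reverse, cSeq, ← List.filter_reverse, ← List.map_reverse]
  rw [List.range'_concat]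
  have h15 : 1 + 1 * n = n + 1 := by omega
  rw [h15, List.reverse_append]
  simp only [List.reverse_cons, List.reverse_nil, List.nil_append, List.singleton_append,
    List.map_cons, List.filter_cons]
  have hd : (@decide (cins (n+1) l ∈ L) (Classical.propDecidable _)) = true :=
    @decide_eq_true _ (Classical.propDecidable _) h
  rw [if_pos hd]
  rfl

lemma Jmain {n : ℕ} {L : Set (List ℕ)} (h : IsZigzag n L) :
    (∀ x, x ∈ Jseq n L ↔ x ∈ L) ∧ (Jseq n L).Nodup := by
  induction h with
  | zero => simp [Jseq]
  | succ n L hsub hzig hcc ih =>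
    obtain ⟨ihmem, ihnd⟩ := ih
    have hsub' : pdel '' L ⊆ SymmList n := zigzag_sub hzig
    set J' := Jseq n (pdel '' L) with hJ'
    set f : ℕ → List ℕ → List (List ℕ) :=
      fun k π => if k % 2 = 0 then (cSeq L (n + 1) π).reverse else cSeq L (n + 1) π with hf
    have hJdef : Jseq (n+1) L = (J'.mapIdx f).flatten := rfl
    have memf : ∀ k π x, x ∈ f k π ↔ x ∈ cSeq L (n+1) π := by
      intro k π x
      rw [hf]; dsimp only
      split <;> simp
    -- membership
    have hmem : ∀ x, x ∈ Jseq (n + 1) L ↔ x ∈ L := by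
      intro x
      rw [hJdef, List.mem_flatten]
      constructor
      · rintro ⟨b, hb, hxb⟩
        rw [List.mem_iff_getElem?] at hb
        obtain ⟨k, hk⟩ := hb
        rw [List.getElem?_mapIdx] at hk
        obtain ⟨π', hπ', hfk⟩ : ∃ π', J'[k]? = some π' ∧ f k π' = b := by
          cases hJk : J'[k]? with
          | none => rw [hJk] at hk; simp at hk
          | some π' => rw [hJk] at hk; simp at hk; exact ⟨π', rfl, hk⟩
        rw [← hfk, memf, mem_cSeq] at hxb
        exact hxb.2
      · intro hx
        have hxs : x ∈ SymmList (n + 1) := hsub hx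
        obtain ⟨i, hi1, hi2, hxe, hpx⟩ := recons hxs
        have hpL : pdel x ∈ pdel '' L := ⟨x, hx, rfl⟩
        have hpJ : pdel x ∈ J' := (ihmem _).2 hpL
        rw [List.mem_iff_getElem?] at hpJ
        obtain ⟨k, hk⟩ := hpJ
        refine ⟨f k (pdel x), ?_, ?_⟩
        · rw [List.mem_iff_getElem?]
          exact ⟨k, by rw [List.getElem?_mapIdx, hk]; rfl⟩
        · rw [memf, mem_cSeq]
          exact ⟨⟨i, hi1, hi2, hxe⟩, hx⟩
    refine ⟨hmem, ?_⟩
    rw [hJdef, List.nodup_flatten]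
    constructor
    · intro b hb
      rw [List.mem_iff_getElem?] at hb
      obtain ⟨k, hk⟩ := hb
      rw [List.getElem?_mapIdx] at hk
      cases hJk : J'[k]? with
      | none => rw [hJk] at hk; simp at hk
      | some π' =>
        rw [hJk] at hk; simp at hk
        have hπ'S : π' ∈ SymmList n := hsub' ((ihmem _).1 (by
          rw [List.mem_iff_getElem?]; exact ⟨k, hJk⟩))
        rw [← hk, hf]; dsimp only
        split
        · exact List.nodup_reverse.2 (cSeq_nodup hπ'S)
        · exact cSeq_nodup hπ'S
    · rw [List.pairwise_iff_getElem]
      intro i j hi hj hij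
      have hli : i < J'.length := by rwa [List.length_mapIdx] at hi
      have hlj : j < J'.length := by rwa [List.length_mapIdx] at hj
      intro x hxi hxj
      have hgi : (J'.mapIdx f)[i] = f i J'[i] := by
        rw [List.getElem_mapIdx]
      have hgj : (J'.mapIdx f)[j] = f j J'[j] := by
        rw [List.getElem_mapIdx]
      rw [hgi, memf, mem_cSeq] at hxi
      rw [hgj, memf, mem_cSeq] at hxj
      obtain ⟨⟨a, _, _, rfl⟩, _⟩ := hxi
      obtain ⟨⟨a', _, _, he⟩, _⟩ := hxj
      have hSi : J'[i] ∈ SymmList n := hsub' ((ihmem _).1 (List.getElem_mem _))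
      have hSj : J'[j] ∈ SymmList n := hsub' ((ihmem _).1 (List.getElem_mem _))
      have : J'[i] = J'[j] := by
        have e1 := pdel_cins hSi a
        have e2 := pdel_cins hSj a'
        rw [← e1, he, e2]
      exact absurd (ihnd.getElem_inj_iff.1 this) (by omega)

lemma cins_jump {l : List ℕ} (hl : ∀ x ∈ l, x < l.length + 1) {i j : ℕ}
    (h1 : 1 ≤ i) (hij : i < j) (hj : j ≤ l.length + 1) :
    RightJump (cins i l) (cins j l) (l.length + 1) (j - i) := by
  refine ⟨by omega, l.take (i-1), (l.drop (i-1)).take (j-i), l.drop (j-1), ?_, ?_, ?_, ?_⟩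
  · rw [List.length_take, List.length_drop]; omega
  · intro x hx
    exact hl x (List.drop_subset _ _ (List.take_subset _ _ hx))
  · have hBC : l.drop (i-1) = (l.drop (i-1)).take (j-i) ++ l.drop (j-1) := by
      have hdd : (i - 1) + (j - i) = j - 1 := by omega
      have h0 := (List.take_append_drop (j-i) (l.drop (i-1))).symm
      rwa [List.drop_drop, hdd] at h0
    rw [cins]
    conv_lhs => rw [hBC]
  · rw [cins]
    have ht : l.take (j-1) = l.take (i-1) ++ (l.drop (i-1)).take (j-i) := by
      have : j - 1 = (i-1) + (j-i) := by omega
      rw [this, List.take_add]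
    rw [ht, List.append_assoc]

lemma rightJump_cons {π ρ : List ℕ} {v d a : ℕ} (h : RightJump π ρ v d) :
    RightJump (a :: π) (a :: ρ) v d := by
  obtain ⟨hd, A, B, C, h1, h2, h3, h4⟩ := h
  exact ⟨hd, a :: A, B, C, h1, h2, by rw [h3]; rfl, by rw [h4]; rfl⟩

lemma rightJump_concat {π ρ : List ℕ} {v d a : ℕ} (h : RightJump π ρ v d) :
    RightJump (π ++ [a]) (ρ ++ [a]) v d := by
  obtain ⟨hd, A, B, C, h1, h2, h3, h4⟩ := h
  exact ⟨hd, A, B, C ++ [a], h1, h2, by rw [h3]; simp, by rw [h4]; simp⟩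

lemma rightJump_length {π ρ : List ℕ} {v d : ℕ} (h : RightJump π ρ v d) :
    π.length = ρ.length := by
  obtain ⟨_, A, B, C, _, _, h3, h4⟩ := h
  rw [h3, h4]; simp; omega

lemma flatten_consec {α : Type*} (bs : List (List α)) (hne : ∀ b ∈ bs, b ≠ [])
    (k : ℕ) (x y : α) (hx : bs.flatten[k]? = some x) (hy : bs.flatten[k+1]? = some y) :
    (∃ (j : ℕ) (b : List α), bs[j]? = some b ∧ ∃ a : ℕ, b[a]? = some x ∧ b[a+1]? = some y) ∨
    (∃ (j : ℕ) (b b' : List α), bs[j]? = some b ∧ bs[j+1]? = some b' ∧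
      b.getLast? = some x ∧ b'.head? = some y) := by
  induction bs generalizing k with
  | nil => simp at hx
  | cons b bs ih =>
    rw [List.flatten_cons] at hx hy
    rw [List.getElem?_append] at hx hy
    by_cases hk1 : k + 1 < b.length
    · rw [if_pos hk1] at hy
      rw [if_pos (by omega)] at hx
      exact Or.inl ⟨0, b, by simp, k, hx, hy⟩
    by_cases hk : k < b.length
    · -- k = b.length - 1 : boundary
      rw [if_pos hk] at hx
      rw [if_neg hk1] at hy
      have hkb : k = b.length - 1 := by omega
      have hk1b : k + 1 - b.length = 0 := by omega
      rw [hk1b] at hy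
      -- y is head of flatten bs
      cases bs with
      | nil => simp at hy
      | cons b' bs' =>
        rw [List.flatten_cons, List.getElem?_append] at hy
        have hb' : b' ≠ [] := hne b' (by simp)
        have hb'l : 0 < b'.length := List.length_pos_iff.2 hb'
        rw [if_pos hb'l] at hy
        refine Or.inr ⟨0, b, b', by simp, by simp, ?_, ?_⟩
        · rw [List.getLast?_eq_getElem?]
          rw [← hkb]; exact hx
        · rw [List.head?_eq_getElem?]
          exact hy
    · rw [if_neg hk] at hx
      rw [if_neg hk1] at hy
      have hsub : k + 1 - b.length = (k - b.length) + 1 := by omega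
      rw [hsub] at hy
      rcases ih (fun b hb => hne b (by simp [hb])) (k - b.length) hx hy with
        ⟨j, bb, hbb, a, ha1, ha2⟩ | ⟨j, bb, bb', h1, h2, h3, h4⟩
      · exact Or.inl ⟨j+1, bb, by rw [List.getElem?_cons_succ]; exact hbb, a, ha1, ha2⟩
      · exact Or.inr ⟨j+1, bb, bb', by rw [List.getElem?_cons_succ]; exact h1,
          by rw [List.getElem?_cons_succ]; exact h2, h3, h4⟩

lemma sVec_succ_eval (m : ℕ) (L : Set (List ℕ)) (π : List ℕ) :
    sVec (m + 2) L π (m + 2) =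
      if (if ((Jseq (m + 1) (pdel '' L)).idxOf (pdel π)) % 2 = 0
            then (cSeq L (m + 2) (pdel π)).reverse else cSeq L (m + 2) (pdel π)).getLast?
          = some π
      then sVec (m + 1) (pdel '' L) (pdel π) (m + 1) else (m + 2) := by
  rw [sVec]
  by_cases hpar : ((Jseq (m + 1) (pdel '' L)).idxOf (pdel π)) % 2 = 0
  · rw [if_pos hpar]
    split
    · rw [if_neg (by omega), if_neg (by omega), if_pos rfl]
    · rw [if_neg (by omega), if_pos rfl]
  · rw [if_neg hpar]
    split
    · rw [if_neg (by omega), if_neg (by omega), if_pos rfl]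
    · rw [if_neg (by omega), if_pos rfl]

lemma nodup_indexOf {α : Type*} [BEq α] [LawfulBEq α] {l : List α} (hnd : l.Nodup)
    {k : ℕ} {x : α} (h : l[k]? = some x) : l.idxOf x = k := by
  induction l generalizing k with
  | nil => simp at h
  | cons a l ih =>
    rw [List.nodup_cons] at hnd
    cases k with
    | zero =>
      simp only [List.getElem?_cons_zero, Option.some_inj] at h
      subst h
      rw [List.idxOf_cons, beq_self_eq_true, cond_true]
    | succ k =>
      rw [List.getElem?_cons_succ] at h
      have hx : x ∈ l := by
        obtain ⟨h1, h2⟩ := List.getElem?_eq_some_iff.1 h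
        exact h2 ▸ List.getElem_mem h1
      have hax : (a == x) = false := by
        simp only [beq_eq_false_iff_ne, ne_eq]
        rintro rfl; exact hnd.1 hx
      rw [List.idxOf_cons, hax, cond_false, ih hnd.2 h]

lemma mapIdx_getElem?_inv {α β : Type*} {f : ℕ → α → β} {l : List α} {j : ℕ} {b : β}
    (h : (l.mapIdx f)[j]? = some b) : ∃ a, l[j]? = some a ∧ f j a = b := by
  rw [List.getElem?_mapIdx] at h
  cases hj : l[j]? with
  | none => rw [hj] at h; simp at h
  | some a => rw [hj] at h; simp at h; exact ⟨a, rfl, h⟩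

lemma main_aux : ∀ m : ℕ, ∀ L : Set (List ℕ), IsZigzag (m + 1) L →
    ∀ (k : ℕ) (π ρ : List ℕ),
    (Jseq (m + 1) L)[k]? = some π → (Jseq (m + 1) L)[k + 1]? = some ρ →
    ∃ d, LeftJump π ρ (sVec (m + 1) L π (m + 1)) d ∨
         RightJump π ρ (sVec (m + 1) L π (m + 1)) d := by
  intro m
  induction m with
  | zero =>
    intro L hL k π ρ hπ hρ
    exfalso
    have hm : [1] ∈ L := by
      cases hL with
      | succ n L hsub hzig hcc =>
        have h0 : pdel '' L = {[]} := zigzag_zero hzig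
        have := (hcc [] (by rw [h0]; rfl)).1
        simpa [cins] using this
    have hJ : Jseq 1 L = [[1]] := by
      show ((Jseq 0 (pdel '' L)).mapIdx _).flatten = _
      have h0 : Jseq 0 (pdel '' L) = [[]] := rfl
      rw [h0]
      have hc : cSeq L 1 [] = [[1]] := by
        have hd : (@decide ((cins 1 []) ∈ L) (Classical.propDecidable _)) = true :=
          @decide_eq_true _ (Classical.propDecidable _) (by simpa [cins] using hm)
        simp only [cSeq, List.range'_one, List.map_cons, List.map_nil, List.filter_cons,
          hd, if_pos]
        simp [cins]
      rw [show ([[]] : List (List ℕ)).mapIdx (fun k π => if k % 2 = 0 then (cSeq L 1 π).reverse else cSeq L 1 π) = [(cSeq L 1 []).reverse] from by simp [List.mapIdx_cons], hc]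
      rfl
    rw [hJ, List.getElem?_cons_succ] at hρ
    simp at hρ
  | succ m ih =>
    intro L hL k π ρ hπ hρ
    obtain ⟨hsub, hzig, hcc⟩ : L ⊆ SymmList (m+2) ∧ IsZigzag (m+1) (pdel '' L) ∧
        (∀ l ∈ pdel '' L, cins 1 l ∈ L ∧ cins (m+2) l ∈ L) := by
      cases hL with
      | succ n L hsub hzig hcc => exact ⟨hsub, hzig, hcc⟩
    set L' := pdel '' L with hL'
    set J' := Jseq (m + 1) L' with hJ'
    set f : ℕ → List ℕ → List (List ℕ) :=
      fun j π => if j % 2 = 0 then (cSeq L (m + 2) π).reverse else cSeq L (m + 2) π with hf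
    have hJdef : Jseq (m + 2) L = (J'.mapIdx f).flatten := rfl
    obtain ⟨Jmem', Jnd'⟩ := Jmain hzig
    obtain ⟨Jmem, Jnd⟩ := Jmain hL
    have hsub' : L' ⊆ SymmList (m + 1) := zigzag_sub hzig
    have memf : ∀ j π' x, x ∈ f j π' ↔ x ∈ cSeq L (m + 2) π' := by
      intro j π' x; rw [hf]; dsimp only; split <;> simp
    -- each block is nonempty
    have hbne : ∀ b ∈ J'.mapIdx f, b ≠ [] := by
      intro b hb
      rw [List.mem_iff_getElem?] at hb
      obtain ⟨j, hj⟩ := hb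
      obtain ⟨π', hπ', hfb⟩ := mapIdx_getElem?_inv hj
      have hπ'L : π' ∈ L' := (Jmem' _).1 (by rw [List.mem_iff_getElem?]; exact ⟨j, hπ'⟩)
      have h1 : cins 1 π' ∈ L := (hcc _ hπ'L).1
      have hhd : (cSeq L (m + 2) π').head? = some (cins 1 π') := cSeq_head h1
      have hnn : cSeq L (m + 2) π' ≠ [] := by
        intro he; rw [he] at hhd; simp at hhd
      rw [← hfb, hf]; dsimp only
      split
      · simpa using hnn
      · exact hnn
    rw [hJdef] at hπ hρ
    have hne : π ≠ ρ := by
      have Jnd2 : ((J'.mapIdx f).flatten).Nodup := by rw [← hJdef]; exact Jnd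
      obtain ⟨hk1, he1⟩ := List.getElem?_eq_some_iff.1 hπ
      obtain ⟨hk2, he2⟩ := List.getElem?_eq_some_iff.1 hρ
      intro he
      have : (k : ℕ) = k + 1 := Jnd2.getElem_inj_iff.1 (by rw [he1, he2, he])
      omega
    rcases flatten_consec _ hbne k π ρ hπ hρ with
      ⟨j, b, hb, a, ha1, ha2⟩ | ⟨j, b, b', hb, hb', hlast, hhead⟩
    · -- within a block: jump of the value m+2
      obtain ⟨π', hπ', hfb⟩ := mapIdx_getElem?_inv hb
      have hπ'L : π' ∈ L' := (Jmem' _).1 (by rw [List.mem_iff_getElem?]; exact ⟨j, hπ'⟩)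
      have hπ'S : π' ∈ SymmList (m + 1) := hsub' hπ'L
      have hπ'len : π'.length = m + 1 := symm_length hπ'S
      have hπb : π ∈ b := by
        obtain ⟨h1, h2⟩ := List.getElem?_eq_some_iff.1 ha1
        exact h2 ▸ List.getElem_mem h1
      have hρb : ρ ∈ b := by
        obtain ⟨h1, h2⟩ := List.getElem?_eq_some_iff.1 ha2
        exact h2 ▸ List.getElem_mem h1
      rw [← hfb, memf, mem_cSeq] at hπb hρb
      obtain ⟨⟨i₁, hi11, hi12, hπe⟩, hπL⟩ := hπb
      obtain ⟨⟨i₂, hi21, hi22, hρe⟩, hρL⟩ := hρb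
      have hii : i₁ ≠ i₂ := by rintro rfl; exact hne (hπe.trans hρe.symm)
      -- compute sVec = m + 2
      have hpdel : pdel π = π' := by rw [hπe]; exact pdel_cins hπ'S _
      have hidx : J'.idxOf π' = j := nodup_indexOf Jnd' hπ'
      have hbnd : b.Nodup := by
        rw [← hfb, hf]; dsimp only
        split
        · exact List.nodup_reverse.2 (cSeq_nodup hπ'S)
        · exact cSeq_nodup hπ'S
      have hcbar : (if (J'.idxOf (pdel π)) % 2 = 0
          then (cSeq L (m + 2) (pdel π)).reverse else cSeq L (m + 2) (pdel π)) = b := by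
        rw [hpdel, hidx, ← hfb, hf]
      have hnotlast : ¬ ((if (J'.idxOf (pdel π)) % 2 = 0
          then (cSeq L (m + 2) (pdel π)).reverse else cSeq L (m + 2) (pdel π)).getLast?
          = some π) := by
        rw [hcbar]
        intro hlast
        rw [List.getLast?_eq_getElem?] at hlast
        obtain ⟨h1, h2⟩ := List.getElem?_eq_some_iff.1 hlast
        obtain ⟨h3, h4⟩ := List.getElem?_eq_some_iff.1 ha1
        obtain ⟨h5, _⟩ := List.getElem?_eq_some_iff.1 ha2
        have : b.length - 1 = a := hbnd.getElem_inj_iff.1 (by rw [h2, h4])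
        omega
      have hsv : sVec (m + 2) L π (m + 2) = m + 2 := by
        rw [sVec_succ_eval, ← hJ', ← hL', if_neg hnotlast]
      rw [hsv]
      have hl : ∀ x ∈ π', x < π'.length + 1 := by
        intro x hx
        have := symm_mem hπ'S hx
        omega
      rcases Nat.lt_or_ge i₁ i₂ with h | h
      · refine ⟨i₂ - i₁, Or.inr ?_⟩
        rw [hπe, hρe]
        have := cins_jump hl hi11 h (by omega)
        rwa [hπ'len] at this
      · have h' : i₂ < i₁ := by omega
        refine ⟨i₁ - i₂, Or.inl ?_⟩
        rw [LeftJump, hπe, hρe]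
        have := cins_jump hl hi21 h' (by omega)
        rwa [hπ'len] at this
    · -- boundary between blocks: lift the jump from level m+1
      obtain ⟨π₁, hπ₁, hfb⟩ := mapIdx_getElem?_inv hb
      obtain ⟨π₂, hπ₂, hfb'⟩ := mapIdx_getElem?_inv hb'
      have hπ₁L : π₁ ∈ L' := (Jmem' _).1 (by rw [List.mem_iff_getElem?]; exact ⟨j, hπ₁⟩)
      have hπ₂L : π₂ ∈ L' := (Jmem' _).1 (by rw [List.mem_iff_getElem?]; exact ⟨j+1, hπ₂⟩)
      have hπ₁S : π₁ ∈ SymmList (m + 1) := hsub' hπ₁L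
      have hπ₂S : π₂ ∈ SymmList (m + 1) := hsub' hπ₂L
      have hπ₁len : π₁.length = m + 1 := symm_length hπ₁S
      have hπ₂len : π₂.length = m + 1 := symm_length hπ₂S
      obtain ⟨hc1₁, hc2₁⟩ := hcc _ hπ₁L
      obtain ⟨hc1₂, hc2₂⟩ := hcc _ hπ₂L
      -- identify π and ρ
      have hkey : (π = cins 1 π₁ ∧ ρ = cins 1 π₂) ∨
          (π = cins (m + 2) π₁ ∧ ρ = cins (m + 2) π₂) := by
        rcases Nat.even_or_odd j with hj | hj
        · left
          have hj0 : j % 2 = 0 := Nat.even_iff.1 hj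
          have hj1 : ¬ ((j + 1) % 2 = 0) := by omega
          rw [← hfb, hf] at hlast; dsimp only at hlast
          rw [if_pos hj0, List.getLast?_reverse, cSeq_head hc1₁] at hlast
          rw [← hfb', hf] at hhead; dsimp only at hhead
          rw [if_neg hj1, cSeq_head hc1₂] at hhead
          exact ⟨(Option.some_inj.1 hlast).symm, (Option.some_inj.1 hhead).symm⟩
        · right
          have hj0 : ¬ (j % 2 = 0) := by
            rcases hj with ⟨c, hc⟩; omega
          have hj1 : (j + 1) % 2 = 0 := by
            rcases hj with ⟨c, hc⟩; omega
          rw [← hfb, hf] at hlast; dsimp only at hlast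
          rw [if_neg hj0, cSeq_getLast hc2₁] at hlast
          rw [← hfb', hf] at hhead; dsimp only at hhead
          rw [if_pos hj1, List.head?_reverse, cSeq_getLast hc2₂] at hhead
          exact ⟨(Option.some_inj.1 hlast).symm, (Option.some_inj.1 hhead).symm⟩
      -- sVec value at the boundary
      have hpdel : pdel π = π₁ := by
        rcases hkey with ⟨h1, _⟩ | ⟨h1, _⟩ <;> rw [h1, pdel_cins hπ₁S]
      have hidx : J'.idxOf π₁ = j := nodup_indexOf Jnd' hπ₁
      have hcbar : (if (J'.idxOf (pdel π)) % 2 = 0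
          then (cSeq L (m + 2) (pdel π)).reverse else cSeq L (m + 2) (pdel π)) = b := by
        rw [hpdel, hidx, ← hfb, hf]
      have hsv : sVec (m + 2) L π (m + 2) = sVec (m + 1) L' (pdel π) (m + 1) := by
        rw [sVec_succ_eval, ← hJ', ← hL', if_pos (by rw [hcbar]; exact hlast)]
      obtain ⟨d, hjump⟩ := ih L' hzig j π₁ π₂ hπ₁ hπ₂
      rw [hsv, hpdel]
      refine ⟨d, ?_⟩
      rcases hkey with ⟨h1, h2⟩ | ⟨h1, h2⟩
      · rw [h1, h2, cins_one, cins_one, hπ₁len, hπ₂len]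
        rcases hjump with hl | hr
        · exact Or.inl (rightJump_cons hl)
        · exact Or.inr (rightJump_cons hr)
      · have e1 : cins (m + 2) π₁ = π₁ ++ [m + 2] := by
          have := cins_last π₁; rwa [hπ₁len] at this
        have e2 : cins (m + 2) π₂ = π₂ ++ [m + 2] := by
          have := cins_last π₂; rwa [hπ₂len] at this
        rw [h1, h2, e1, e2]
        rcases hjump with hl | hr
        · exact Or.inl (rightJump_concat hl)
        · exact Or.inr (rightJump_concat hr)

end AuxLemmas

/-- Let `L_n ⊆ S_n` be a zigzag language with `n ≥ 1`. For any
two consecutive permutations `π, ρ` in `J(L_n)`, the permutation `ρ` is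
obtained from `π` by a jump of the value `s_{n,n}^π`. -/
theorem Jseq_jump_value_is_sVec (n : ℕ) (hn : 1 ≤ n) (L : Set (List ℕ))
    (hL : IsZigzag n L) (k : ℕ) (π ρ : List ℕ)
    (hπ : (Jseq n L)[k]? = some π) (hρ : (Jseq n L)[k + 1]? = some ρ) :
    ∃ d, LeftJump π ρ (sVec n L π n) d ∨ RightJump π ρ (sVec n L π n) d := by
  obtain ⟨m, rfl⟩ : ∃ m, n = m + 1 := ⟨n - 1, by omega⟩
  exact main_aux m L hL k π ρ hπ hρ
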